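/- There exists no finite simple graph on a nonempty vertex set that is 5-regular and in which the subgraph induced by the open neighbourhood of every vertex has exactly 9 edges; that is, no (5,9)-constant graph exists. -/

import Mathlib

open SimpleGraph Finset

noncomputable def nbhdEdgeCount {V : Type*} (G : SimpleGraph V) (v : V) : ℕ :=
  Nat.card (SimpleGraph.induce (G.neighborSet v) G).edgeSet

lemma sum_codeg {V : Type} [Fintype V] [DecidableEq V] (G : SimpleGraph V)
    [DecidableRel G.Adj] (v : V) :
    ∑ u ∈ G.neighborFinset v, (G.neighborFinset u ∩ G.neighborFinset v).card
      = 2 * nbhdEdgeCount G v := by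
  classical
  have h := (G.induce (G.neighborSet v)).sum_degrees_eq_twice_card_edges
  have hcard : nbhdEdgeCount G v = (G.induce (G.neighborSet v)).edgeFinset.card := by
    rw [nbhdEdgeCount, Nat.card_eq_fintype_card, SimpleGraph.edgeFinset_card]
  rw [hcard, ← h]
  have hdeg : ∀ (x : ↥(G.neighborSet v)),
      (G.induce (G.neighborSet v)).degree x
        = (G.neighborFinset ↑x ∩ G.neighborFinset v).card := by
    intro x
    rw [degree]
    refine Finset.card_bij (fun w _ => (w : V)) ?_ ?_ ?_
    · intro w hw
      simp only [mem_neighborFinset, comap_adj, Function.Embedding.coe_subtype] at hw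
      simp only [mem_inter, mem_neighborFinset]
      exact ⟨hw, w.2⟩
    · intro a ha b hb hab
      exact Subtype.ext hab
    · intro b hb
      simp only [mem_inter, mem_neighborFinset] at hb
      exact ⟨⟨b, hb.2⟩, by simp [mem_neighborFinset, comap_adj, hb.1], rfl⟩
  rw [show ∑ x, (G.induce (G.neighborSet v)).degree x
      = ∑ x : ↥(G.neighborSet v), (G.neighborFinset ↑x ∩ G.neighborFinset v).card from
    Finset.sum_congr rfl (fun x _ => hdeg x)]
  rw [← Finset.sum_coe_sort (G.neighborFinset v)
      (fun u => (G.neighborFinset u ∩ G.neighborFinset v).card)]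
  apply Fintype.sum_equiv
    (Equiv.subtypeEquivRight (by intro x; simp [mem_neighborFinset, mem_neighborSet]))
  intro x
  rfl

theorem no_five_nine_constant_graph :
    ¬ ∃ (V : Type) (_ : Fintype V) (_ : Nonempty V) (G : SimpleGraph V),
      (∀ v : V, Nat.card (G.neighborSet v) = 5) ∧
      (∀ v : V, nbhdEdgeCount G v = 9) := by
  rintro ⟨V, _, ⟨v⟩, G, hdeg, hedge⟩
  classical
  set N := G.neighborFinset with hN_def
  -- degree 5 as finsets
  have hN5 : ∀ u : V, (N u).card = 5 := by
    intro u
    rw [hN_def, neighborFinset_def, Set.toFinset_card, ← Nat.card_eq_fintype_card]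
    exact hdeg u
  have hself : ∀ u : V, u ∉ N u := by
    intro u hu
    exact G.irrefl ((mem_neighborFinset _ _ _).1 hu)
  have hsymm : ∀ {x y : V}, x ∈ N y → y ∈ N x := by
    intro x y h
    rw [hN_def, mem_neighborFinset] at *
    exact h.symm
  have hsum : ∀ u : V, ∑ w ∈ N u, (N w ∩ N u).card = 18 := by
    intro u
    rw [hN_def, sum_codeg G u, hedge u]
  -- codegree bound
  have hcodeg4 : ∀ {x y : V}, x ∈ N y → (N x ∩ N y).card ≤ 4 := by
    intro x y hxy
    have hsub : N x ∩ N y ⊆ (N y).erase x := by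
      intro z hz
      rw [mem_inter] at hz
      exact mem_erase.2 ⟨fun h => hself x (h ▸ hz.1), hz.2⟩
    calc (N x ∩ N y).card ≤ ((N y).erase x).card := card_le_card hsub
    _ = 4 := by rw [card_erase_of_mem hxy, hN5]
  -- find an edge of codegree 4 at v
  have hexu : ∃ u ∈ N v, (N u ∩ N v).card = 4 := by
    by_contra h
    push_neg at h
    have hle : ∀ u ∈ N v, (N u ∩ N v).card ≤ 3 := by
      intro u hu
      have := hcodeg4 hu
      have := h u hu
      omega
    have := Finset.sum_le_card_nsmul (N v) (fun u => (N u ∩ N v).card) 3 hle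
    rw [hsum v, hN5] at this
    simp only [smul_eq_mul] at this
    omega
  obtain ⟨u, huNv, hcod⟩ := hexu
  set S := N u ∩ N v with hS_def
  have hS4 : S.card = 4 := hcod
  have huS : u ∉ S := fun h => hself u (mem_inter.1 h).1
  have hvS : v ∉ S := fun h => hself v (mem_inter.1 h).2
  have hvNu : v ∈ N u := hsymm huNv
  have huv : u ≠ v := fun h => hself v (h ▸ huNv)
  -- N u and N v determined
  have hNu : N u = insert v S := by
    symm
    apply Finset.eq_of_subset_of_card_le
    · intro x hx
      rcases mem_insert.1 hx with h | h
      · exact h ▸ hvNu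
      · exact (mem_inter.1 h).1
    · rw [hN5, card_insert_of_notMem hvS, hS4]
  have hNv : N v = insert u S := by
    symm
    apply Finset.eq_of_subset_of_card_le
    · intro x hx
      rcases mem_insert.1 hx with h | h
      · exact h ▸ huNv
      · exact (mem_inter.1 h).2
    · rw [hN5, card_insert_of_notMem huS, hS4]
  -- every element of S is adjacent to u and v
  have hSu : ∀ x ∈ S, u ∈ N x := fun x hx => hsymm (mem_inter.1 hx).1
  have hSv : ∀ x ∈ S, v ∈ N x := fun x hx => hsymm (mem_inter.1 hx).2
  -- internal degrees in S
  have hdS3 : ∀ x ∈ S, (N x ∩ S).card ≤ 3 := by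
    intro x hx
    have hsub : N x ∩ S ⊆ S.erase x := by
      intro z hz
      rw [mem_inter] at hz
      exact mem_erase.2 ⟨fun h => hself x (h ▸ hz.1), hz.2⟩
    calc (N x ∩ S).card ≤ (S.erase x).card := card_le_card hsub
    _ = 3 := by rw [card_erase_of_mem hx, hS4]
  -- sum of internal degrees is 10
  have hsum10 : ∑ x ∈ S, (N x ∩ S).card = 10 := by
    have h18 := hsum v
    rw [hNv, Finset.sum_insert huS, ← hNv] at h18
    have hfirst : (N u ∩ N v).card = 4 := by rw [← hS_def]; exact hS4
    have hterm : ∀ x ∈ S, (N x ∩ N v).card = (N x ∩ S).card + 1 := by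
      intro x hx
      have hu_mem : u ∈ N x := hSu x hx
      have : N x ∩ N v = insert u (N x ∩ S) := by
        rw [hNv]
        ext z
        simp only [mem_inter, mem_insert]
        constructor
        · rintro ⟨hz1, hz2 | hz2⟩
          · exact Or.inl hz2
          · exact Or.inr ⟨hz1, hz2⟩
        · rintro (rfl | ⟨hz1, hz2⟩)
          · exact ⟨hu_mem, Or.inl rfl⟩
          · exact ⟨hz1, Or.inr hz2⟩
      rw [this, card_insert_of_notMem (fun h => huS (mem_inter.1 h).2)]
    rw [Finset.sum_congr rfl hterm, Finset.sum_add_distrib, Finset.sum_const, hS4,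
      smul_eq_mul] at h18
    omega
  -- find c with internal degree ≤ 2
  have hexc : ∃ c ∈ S, (N c ∩ S).card ≤ 2 := by
    by_contra h
    push_neg at h
    have : ∀ x ∈ S, 3 ≤ (N x ∩ S).card := fun x hx => h x hx
    have := Finset.card_nsmul_le_sum S (fun x => (N x ∩ S).card) 3 this
    rw [hsum10, hS4] at this
    simp only [smul_eq_mul] at this
    omega
  obtain ⟨c, hcS, hdc⟩ := hexc
  -- find two distinct elements a b of S.erase c with internal degree 3
  have hEcard : (S.erase c).card = 3 := by rw [card_erase_of_mem hcS, hS4]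
  have hsumE : 8 ≤ ∑ x ∈ S.erase c, (N x ∩ S).card := by
    have h := Finset.sum_insert (s := S.erase c) (f := fun x => (N x ∩ S).card)
      (notMem_erase c S)
    rw [Finset.insert_erase hcS] at h
    omega
  obtain ⟨x, y, z, hxy, hxz, hyz, hE⟩ := Finset.card_eq_three.1 hEcard
  have hxE : x ∈ S.erase c := by rw [hE]; simp
  have hyE : y ∈ S.erase c := by rw [hE]; simp
  have hzE : z ∈ S.erase c := by rw [hE]; simp
  have hdx := hdS3 x (mem_of_mem_erase hxE)
  have hdy := hdS3 y (mem_of_mem_erase hyE)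
  have hdz := hdS3 z (mem_of_mem_erase hzE)
  have hsum3 : 8 ≤ (N x ∩ S).card + (N y ∩ S).card + (N z ∩ S).card := by
    rw [hE] at hsumE
    rw [Finset.sum_insert (by simp [hxy, hxz]), Finset.sum_insert (by simp [hyz]),
      Finset.sum_singleton] at hsumE
    omega
  have hex2 : ∃ a b, a ≠ b ∧ a ∈ S.erase c ∧ b ∈ S.erase c ∧
      (N a ∩ S).card = 3 ∧ (N b ∩ S).card = 3 := by
    have : ((N x ∩ S).card = 3 ∧ (N y ∩ S).card = 3) ∨
        ((N x ∩ S).card = 3 ∧ (N z ∩ S).card = 3) ∨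
        ((N y ∩ S).card = 3 ∧ (N z ∩ S).card = 3) := by omega
    rcases this with ⟨h1, h2⟩ | ⟨h1, h2⟩ | ⟨h1, h2⟩
    · exact ⟨x, y, hxy, hxE, hyE, h1, h2⟩
    · exact ⟨x, z, hxz, hxE, hzE, h1, h2⟩
    · exact ⟨y, z, hyz, hyE, hzE, h1, h2⟩
  obtain ⟨a, b, hab, haE, hbE, hda3, hdb3⟩ := hex2
  have haS : a ∈ S := mem_of_mem_erase haE
  have hbS : b ∈ S := mem_of_mem_erase hbE
  have hac : a ≠ c := ne_of_mem_erase haE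
  have hbc : b ≠ c := ne_of_mem_erase hbE
  -- a, b adjacent to everything else in S
  have hfull : ∀ x, x ∈ S → (N x ∩ S).card = 3 → N x ∩ S = S.erase x := by
    intro x hx h3
    apply Finset.eq_of_subset_of_card_le
    · intro z hz
      rw [mem_inter] at hz
      exact mem_erase.2 ⟨fun h => hself x (h ▸ hz.1), hz.2⟩
    · rw [card_erase_of_mem hx, hS4, h3]
  have hNaS := hfull a haS hda3
  have hNbS := hfull b hbS hdb3
  have haNc : a ∈ N c := by
    have : c ∈ N a ∩ S := hNaS ▸ mem_erase.2 ⟨hac.symm, hcS⟩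
    exact hsymm (mem_inter.1 this).1
  have hbNc : b ∈ N c := by
    have : c ∈ N b ∩ S := hNbS ▸ mem_erase.2 ⟨hbc.symm, hcS⟩
    exact hsymm (mem_inter.1 this).1
  -- N c ∩ S = {a, b}
  have hNcS : N c ∩ S = {a, b} := by
    symm
    apply Finset.eq_of_subset_of_card_le
    · intro z hz
      rcases mem_insert.1 hz with rfl | hz
      · exact mem_inter.2 ⟨haNc, haS⟩
      · rw [mem_singleton] at hz
        exact hz ▸ mem_inter.2 ⟨hbNc, hbS⟩
    · rw [card_insert_of_notMem (by simpa using hab), card_singleton]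
      exact hdc
  -- the set P and the extra vertex w
  have huNc : u ∈ N c := hSu c hcS
  have hvNc : v ∈ N c := hSv c hcS
  set P : Finset V := insert u (insert v {a, b}) with hP_def
  have haP_ne : u ∉ insert v ({a, b} : Finset V) := by
    simp only [mem_insert, mem_singleton]
    push_neg
    exact ⟨huv, fun h => huS (h ▸ haS), fun h => huS (h ▸ hbS)⟩
  have hvP_ne : v ∉ ({a, b} : Finset V) := by
    simp only [mem_insert, mem_singleton]
    push_neg
    exact ⟨fun h => hvS (h ▸ haS), fun h => hvS (h ▸ hbS)⟩
  have hPcard : P.card = 4 := by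
    rw [hP_def, card_insert_of_notMem haP_ne, card_insert_of_notMem hvP_ne,
      card_insert_of_notMem (by simpa using hab), card_singleton]
  have hPNc : P ⊆ N c := by
    intro z hz
    rcases mem_insert.1 hz with rfl | hz
    · exact huNc
    rcases mem_insert.1 hz with rfl | hz
    · exact hvNc
    rcases mem_insert.1 hz with rfl | hz
    · exact haNc
    · rw [mem_singleton] at hz; exact hz ▸ hbNc
  have hexw : ∃ w ∈ N c, w ∉ P := by
    rw [← Finset.not_subset]
    intro h
    have := card_le_card h
    rw [hN5, hPcard] at this
    omega
  obtain ⟨w, hwNc, hwP⟩ := hexw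
  have hwu : w ≠ u := fun h => hwP (h ▸ mem_insert_self _ _)
  have hwv : w ≠ v := fun h => hwP (by rw [h, hP_def]; exact mem_insert_of_mem (mem_insert_self _ _))
  have hwa : w ≠ a := fun h => hwP (by rw [h, hP_def]; simp)
  have hwb : w ≠ b := fun h => hwP (by rw [h, hP_def]; simp)
  have hwS : w ∉ S := by
    intro h
    have : w ∈ N c ∩ S := mem_inter.2 ⟨hwNc, h⟩
    rw [hNcS] at this
    rcases mem_insert.1 this with h' | h'
    · exact hwa h'
    · exact hwb (mem_singleton.1 h')
  -- N c fully determined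
  have hNc : N c = insert w P := by
    symm
    apply Finset.eq_of_subset_of_card_le
    · intro z hz
      rcases mem_insert.1 hz with rfl | hz
      · exact hwNc
      · exact hPNc hz
    · rw [hN5, card_insert_of_notMem hwP, hPcard]
  -- N a and N b fully determined
  have hNfull : ∀ x, x ∈ S → N x ∩ S = S.erase x → N x = insert u (insert v (S.erase x)) := by
    intro x hx hfx
    symm
    apply Finset.eq_of_subset_of_card_le
    · intro z hz
      rcases mem_insert.1 hz with rfl | hz
      · exact hSu x hx
      rcases mem_insert.1 hz with rfl | hz
      · exact hSv x hx
      · exact (mem_inter.1 (hfx ▸ hz)).1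
    · have h1 : u ∉ insert v (S.erase x) := by
        intro h
        rcases mem_insert.1 h with h' | h'
        · exact huv h'
        · exact huS (mem_of_mem_erase h')
      have h2 : v ∉ S.erase x := fun h => hvS (mem_of_mem_erase h)
      rw [hN5, card_insert_of_notMem h1, card_insert_of_notMem h2,
        card_erase_of_mem hx, hS4]
  have hNa := hNfull a haS hNaS
  have hNb := hNfull b hbS hNbS
  -- w is adjacent to none of u, v, a, b
  have hwNu : w ∉ N u := by
    rw [hNu]
    intro h
    rcases mem_insert.1 h with h' | h'
    · exact hwv h'
    · exact hwS h'
  have hwNv : w ∉ N v := by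
    rw [hNv]
    intro h
    rcases mem_insert.1 h with h' | h'
    · exact hwu h'
    · exact hwS h'
  have hwNa : w ∉ N a := by
    rw [hNa]
    intro h
    rcases mem_insert.1 h with h' | h'
    · exact hwu h'
    rcases mem_insert.1 h' with h'' | h''
    · exact hwv h''
    · exact hwS (mem_of_mem_erase h'')
  have hwNb : w ∉ N b := by
    rw [hNb]
    intro h
    rcases mem_insert.1 h with h' | h'
    · exact hwu h'
    rcases mem_insert.1 h' with h'' | h''
    · exact hwv h''
    · exact hwS (mem_of_mem_erase h'')
  -- final count at c
  have h18 := hsum c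
  rw [hNc, Finset.sum_insert hwP, ← hNc] at h18
  have hw0 : (N w ∩ N c).card = 0 := by
    rw [Finset.card_eq_zero, Finset.eq_empty_iff_forall_notMem]
    intro z hz
    rw [mem_inter] at hz
    obtain ⟨hz1, hz2⟩ := hz
    rw [hNc] at hz2
    rcases mem_insert.1 hz2 with rfl | hz2
    · exact hself _ hz1
    rcases mem_insert.1 hz2 with rfl | hz2
    · exact hwNu (hsymm hz1)
    rcases mem_insert.1 hz2 with rfl | hz2
    · exact hwNv (hsymm hz1)
    rcases mem_insert.1 hz2 with rfl | hz2
    · exact hwNa (hsymm hz1)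
    · rw [mem_singleton] at hz2
      subst hz2
      exact hwNb (hsymm hz1)
  have hPbound : ∀ x ∈ P, (N x ∩ N c).card ≤ 3 := by
    intro x hxP
    have hxNc : x ∈ N c := hPNc hxP
    have hwNx : w ∉ N x := by
      rcases mem_insert.1 hxP with rfl | h
      · exact hwNu
      rcases mem_insert.1 h with rfl | h
      · exact hwNv
      rcases mem_insert.1 h with rfl | h
      · exact hwNa
      · rw [mem_singleton] at h; exact h ▸ hwNb
    have hxw : x ≠ w := fun h => hwP (h ▸ hxP)
    have hsub : N x ∩ N c ⊆ ((N c).erase w).erase x := by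
      intro z hz
      rw [mem_inter] at hz
      refine mem_erase.2 ⟨fun h => hself x (h ▸ hz.1), mem_erase.2 ⟨?_, hz.2⟩⟩
      intro h
      exact hwNx (h ▸ hz.1)
    have := card_le_card hsub
    rw [card_erase_of_mem (mem_erase.2 ⟨hxw, hxNc⟩), card_erase_of_mem hwNc, hN5] at this
    omega
  have hPsum := Finset.sum_le_card_nsmul P (fun x => (N x ∩ N c).card) 3 hPbound
  rw [hPcard] at hPsum
  simp only [smul_eq_mul] at hPsum
  omega
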